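/- Let H be a Hermitian matrix on ℂ^D with orthonormal eigenbasis {|E_n⟩}, and let X be a unitary D×D complex Hadamard matrix (|X_{kn}|² = 1/D for all k,n). Define |k⟩ = Σ_n X_{kn}|E_n⟩. Then for each k and every real t, |⟨k| e^{-iHt} |k⟩|² = (1/D²)|Tr e^{-iHt}|² = K(t). In particular the mean return probability over the basis {|k⟩} equals K(t), saturating the bound P_S(t) ≥ K(t). -/
import Mathlib


/-- for a complex Hadamard unitary `X` (all entries of modulus `1/√D`),
each basis state `|k⟩ = Σ_n X_{kn}|E_n⟩` has return probability equal to the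
spectral form factor `K(t)`. -/
theorem stmt7 (D : ℕ) (H : Matrix (Fin D) (Fin D) ℂ) (hH : H.IsHermitian)
    (X : Matrix (Fin D) (Fin D) ℂ) (hX : X ∈ Matrix.unitaryGroup (Fin D) ℂ)
    (hmod : ∀ k n, ‖X k n‖ ^ 2 = 1 / (D : ℝ)) (k : Fin D) (t : ℝ) :
    ‖∑ n, star (X k n) * X k n *
        Complex.exp (-((hH.eigenvalues n * t : ℝ) : ℂ) * Complex.I)‖ ^ 2 =
      (1 / (D : ℝ) ^ 2) *
        ‖∑ n, Complex.exp (-((hH.eigenvalues n * t : ℝ) : ℂ) * Complex.I)‖ ^ 2 := by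
  have h1 : ∀ n : Fin D, star (X k n) * X k n = ((1 / (D : ℝ) : ℝ) : ℂ) := by
    intro n
    rw [Complex.star_def, mul_comm, Complex.mul_conj']
    norm_cast
    exact hmod k n

  calc ‖∑ n, star (X k n) * X k n *
        Complex.exp (-((hH.eigenvalues n * t : ℝ) : ℂ) * Complex.I)‖ ^ 2
      = ‖((1 / (D : ℝ) : ℝ) : ℂ) * ∑ n,
        Complex.exp (-((hH.eigenvalues n * t : ℝ) : ℂ) * Complex.I)‖ ^ 2 := by
        rw [Finset.mul_sum]
        congr 2
        apply Finset.sum_congr rfl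
        intro n _
        rw [h1 n]
    _ = (1 / (D : ℝ) ^ 2) *
        ‖∑ n, Complex.exp (-((hH.eigenvalues n * t : ℝ) : ℂ) * Complex.I)‖ ^ 2 := by
        rw [norm_mul, mul_pow, Complex.norm_real, Real.norm_eq_abs]
        rw [abs_of_nonneg (by positivity)]
        ring
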